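/- Let ν ≠ κ be partitions of the same integer r such that ρ := ν/(ν∩κ) and ρ' := κ/(ν∩κ) are both ribbons. Then ρ and ρ' have the same length, and exactly one of the following holds: ν ◁ κ (ν is strictly dominated by κ) or κ ◁ ν. -/

import Mathlib

/-- Two boxes share a common side. -/
def Adj (a b : ℕ × ℕ) : Prop :=
  (a.1 = b.1 ∧ (a.2 = b.2 + 1 ∨ b.2 = a.2 + 1)) ∨
  (a.2 = b.2 ∧ (a.1 = b.1 + 1 ∨ b.1 = a.1 + 1))

/-- A diagram is connected if any two of its boxes are joined by a path of
side-adjacent boxes lying inside the diagram. -/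
def IsConnectedDiagram (θ : Set (ℕ × ℕ)) : Prop :=
  ∀ a ∈ θ, ∀ b ∈ θ, Relation.ReflTransGen (fun x y => y ∈ θ ∧ Adj x y) a b

/-- The diagram contains no 2×2 block of boxes. -/
def NoSquare (θ : Set (ℕ × ℕ)) : Prop :=
  ¬ ∃ i j : ℕ, (i, j) ∈ θ ∧ (i + 1, j) ∈ θ ∧ (i, j + 1) ∈ θ ∧ (i + 1, j + 1) ∈ θ

/-- A ribbon: a nonempty connected diagram with no 2×2 block of boxes. -/
def IsRibbon (θ : Set (ℕ × ℕ)) : Prop :=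
  θ.Nonempty ∧ IsConnectedDiagram θ ∧ NoSquare θ

/-- Young diagram (rows and columns numbered from 1) of a partition with
at most `r` parts, given as `f : Fin r → ℕ`. -/
def cellsF {r : ℕ} (f : Fin r → ℕ) : Set (ℕ × ℕ) :=
  {p | ∃ i : Fin r, p.1 = (i : ℕ) + 1 ∧ 1 ≤ p.2 ∧ p.2 ≤ f i}

/-- The β-number `λ_i + s + 1 - i` (0-based index `i : Fin r`). -/
def betaNum {r : ℕ} (s : ℤ) (f : Fin r → ℕ) (i : Fin r) : ℤ :=
  (f i : ℤ) + s - (i : ℤ)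

/-- The set of β-numbers. -/
def betaFinset {r : ℕ} (s : ℤ) (f : Fin r → ℕ) : Finset ℤ :=
  Finset.image (betaNum s f) Finset.univ

/-- Dominance: all partial sums of `ν` are at most those of `κ`. -/
def Dominates {r : ℕ} (ν κ : Fin r → ℕ) : Prop :=
  ∀ k : Fin r, ∑ i ∈ Finset.univ.filter (· ≤ k), ν i ≤ ∑ i ∈ Finset.univ.filter (· ≤ k), κ i

/-- Strict dominance. -/
def StrictlyDominates {r : ℕ} (ν κ : Fin r → ℕ) : Prop :=
  Dominates ν κ ∧ ν ≠ κ

/-- If ν ≠ κ are partitions of r such that ρ = ν/(ν∩κ) and ρ' = κ/(ν∩κ) are both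
ribbons, then ρ and ρ' have the same length, and exactly one of ν ◁ κ, κ ◁ ν holds. -/
lemma mem_skew {r : ℕ} (f g : Fin r → ℕ) (p : ℕ × ℕ) :
    p ∈ cellsF f \ cellsF (fun i => min (f i) (g i)) ↔
      ∃ i : Fin r, p.1 = (i : ℕ) + 1 ∧ g i < p.2 ∧ p.2 ≤ f i := by
  constructor
  · rintro ⟨⟨i, h1, h2, h3⟩, h4⟩
    refine ⟨i, h1, ?_, h3⟩
    by_contra h
    push_neg at h
    exact h4 ⟨i, h1, h2, le_min h3 h⟩
  · rintro ⟨i, h1, h2, h3⟩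
    refine ⟨⟨i, h1, by omega, h3⟩, ?_⟩
    rintro ⟨j, hj1, hj2, hj3⟩
    have hji : j = i := Fin.val_injective (by omega)
    subst hji
    exact absurd (hj3.trans (min_le_right _ _)) (by omega)

lemma row_ivt (θ : Set (ℕ × ℕ)) {b : ℕ × ℕ} :
    ∀ {a : ℕ × ℕ}, Relation.ReflTransGen (fun x y => y ∈ θ ∧ Adj x y) a b →
      a ∈ θ → ∀ m : ℕ, a.1 ≤ m → m ≤ b.1 → ∃ c ∈ θ, c.1 = m := by
  intro a h
  induction h using Relation.ReflTransGen.head_induction_on with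
  | refl => intro hb m h1 h2; exact ⟨b, hb, le_antisymm h1 h2⟩
  | @head a c hstep hpath ih =>
    intro ha m h1 h2
    rcases eq_or_lt_of_le h1 with heq | hlt
    · exact ⟨a, ha, heq⟩
    · have hc1 : c.1 ≤ a.1 + 1 := by
        rcases hstep.2 with ⟨h, _⟩ | ⟨_, h | h⟩ <;> omega
      exact ih hstep.1 m (by omega) h2

lemma ribbon_interval {r : ℕ} (f g : Fin r → ℕ)
    (h : IsRibbon (cellsF f \ cellsF (fun i => min (f i) (g i)))) :
    ∀ i j l : Fin r, i ≤ j → j ≤ l → g i < f i → g l < f l → g j < f j := by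
  intro i j l hij hjl hi hl
  have hai : ((i : ℕ) + 1, f i) ∈ cellsF f \ cellsF (fun i => min (f i) (g i)) :=
    (mem_skew f g _).2 ⟨i, rfl, hi, le_rfl⟩
  have hal : ((l : ℕ) + 1, f l) ∈ cellsF f \ cellsF (fun i => min (f i) (g i)) :=
    (mem_skew f g _).2 ⟨l, rfl, hl, le_rfl⟩
  have hpath := h.2.1 _ hai _ hal
  obtain ⟨c, hc, hc1⟩ := row_ivt _ hpath hai ((j : ℕ) + 1)
    (by show (i : ℕ) + 1 ≤ (j : ℕ) + 1; have h' : (i : ℕ) ≤ j := hij; omega)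
    (by show (j : ℕ) + 1 ≤ (l : ℕ) + 1; have h' : (j : ℕ) ≤ l := hjl; omega)
  obtain ⟨i', h1, h2, h3⟩ := (mem_skew f g c).1 hc
  have : i' = j := Fin.val_injective (by omega)
  subst this
  omega

lemma ncard_skew {r : ℕ} (f g : Fin r → ℕ) :
    (cellsF f \ cellsF (fun i => min (f i) (g i))).ncard = ∑ i, (f i - g i) := by
  classical
  have hset : cellsF f \ cellsF (fun i => min (f i) (g i)) =
      ↑((Finset.univ : Finset (Fin r)).biUnion fun i =>
        (Finset.Ioc (g i) (f i)).image fun y => ((i : ℕ) + 1, y)) := by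
    ext p
    rw [mem_skew]
    simp only [Finset.coe_biUnion, Finset.coe_image, Finset.mem_coe, Set.mem_iUnion,
      Set.mem_image, Finset.coe_Ioc, Set.mem_Ioc, Finset.mem_univ, true_and]
    constructor
    · rintro ⟨i, h1, h2, h3⟩
      exact ⟨i, trivial, p.2, ⟨h2, h3⟩, by rw [← h1]⟩
    · rintro ⟨i, -, y, ⟨h2, h3⟩, hy⟩
      refine ⟨i, ?_, ?_, ?_⟩ <;> simp [← hy, h2, h3]
  rw [hset, Set.ncard_coe_finset]
  rw [Finset.card_biUnion]
  · refine Finset.sum_congr rfl fun i _ => ?_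
    rw [Finset.card_image_of_injective _ (fun a b hab => by
      simpa using (Prod.mk.injEq _ _ _ _ ▸ hab).2), Nat.card_Ioc]
  · intro i _ j _ hij
    rw [Function.onFun, Finset.disjoint_left]
    rintro p hp hp'
    simp only [Finset.mem_image] at hp hp'
    obtain ⟨y, -, hy⟩ := hp
    obtain ⟨y', -, hy'⟩ := hp'
    have h2 := congrArg Prod.fst (hy.trans hy'.symm)
    simp only at h2
    exact hij (Fin.val_injective (by omega))

lemma dom_of_sep {r : ℕ} (ν κ : Fin r → ℕ) (hsum : ∑ i, ν i = ∑ i, κ i)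
    (hsep : ∀ a b : Fin r, κ a < ν a → ν b < κ b → a < b) : Dominates κ ν := by
  intro k
  by_cases hb : ∃ b : Fin r, b ≤ k ∧ ν b < κ b
  · obtain ⟨b, hbk, hbB⟩ := hb
    have hc : ∑ i ∈ Finset.univ.filter (fun i => ¬ i ≤ k), ν i ≤
        ∑ i ∈ Finset.univ.filter (fun i => ¬ i ≤ k), κ i := by
      refine Finset.sum_le_sum fun i hi => ?_
      simp only [Finset.mem_filter] at hi
      by_contra h
      push_neg at h
      exact hi.2 ((hsep i b h hbB).le.trans hbk)
    have hs1 := Finset.sum_filter_add_sum_filter_not Finset.univ (fun i => i ≤ k) ν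
    have hs2 := Finset.sum_filter_add_sum_filter_not Finset.univ (fun i => i ≤ k) κ
    have : (Finset.univ.filter (· ≤ k)) = (Finset.univ.filter (fun i => i ≤ k)) := rfl
    rw [this]
    omega
  · push_neg at hb
    refine Finset.sum_le_sum fun i hi => ?_
    simp only [Finset.mem_filter] at hi
    exact hb i hi.2

theorem stmt10 (r : ℕ) (ν κ : Fin r → ℕ) (hν : Antitone ν) (hκ : Antitone κ)
    (hνsum : ∑ i, ν i = r) (hκsum : ∑ i, κ i = r) (hne : ν ≠ κ)
    (hρ : IsRibbon (cellsF ν \ cellsF (fun i => min (ν i) (κ i))))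
    (hρ' : IsRibbon (cellsF κ \ cellsF (fun i => min (ν i) (κ i)))) :
    (cellsF ν \ cellsF (fun i => min (ν i) (κ i))).ncard =
      (cellsF κ \ cellsF (fun i => min (ν i) (κ i))).ncard ∧
    Xor' (StrictlyDominates ν κ) (StrictlyDominates κ ν) := by
  classical
  have hmincomm : (fun i => min (ν i) (κ i)) = (fun i => min (κ i) (ν i)) :=
    funext fun i => min_comm _ _
  have hsum : ∑ i, ν i = ∑ i, κ i := by omega
  constructor
  · rw [ncard_skew ν κ, hmincomm, ncard_skew κ ν]
    have h1 : ∑ i, (ν i - κ i) + ∑ i, min (ν i) (κ i) = ∑ i, ν i := by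
      rw [← Finset.sum_add_distrib]
      exact Finset.sum_congr rfl fun i _ => by omega
    have h2 : ∑ i, (κ i - ν i) + ∑ i, min (ν i) (κ i) = ∑ i, κ i := by
      rw [← Finset.sum_add_distrib]
      exact Finset.sum_congr rfl fun i _ => by omega
    omega
  · have hnotboth : ¬ (Dominates ν κ ∧ Dominates κ ν) := by
      rintro ⟨h1, h2⟩
      apply hne
      have key : ∀ n : ℕ, ∀ i : Fin r, (i : ℕ) = n → ν i = κ i := by
        intro n
        induction n using Nat.strong_induction_on with
        | _ n ih =>
          intro i hi
          have hEq : ∑ j ∈ Finset.univ.filter (· ≤ i), ν j =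
              ∑ j ∈ Finset.univ.filter (· ≤ i), κ j := le_antisymm (h1 i) (h2 i)
          have hfil : Finset.univ.filter (· ≤ i) =
              insert i (Finset.univ.filter (· < i)) := by
            ext j
            simp only [Finset.mem_filter, Finset.mem_insert, Finset.mem_univ, true_and]
            constructor
            · intro h; exact Or.symm h.lt_or_eq
            · rintro (rfl | h)
              · exact le_rfl
              · exact h.le
          rw [hfil, Finset.sum_insert (by simp), Finset.sum_insert (by simp)] at hEq
          have hlt : ∑ j ∈ Finset.univ.filter (· < i), ν j =
              ∑ j ∈ Finset.univ.filter (· < i), κ j := by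
            refine Finset.sum_congr rfl fun j hj => ?_
            simp only [Finset.mem_filter] at hj
            exact ih (j : ℕ) (by subst hi; exact hj.2) j rfl
          omega
      exact funext fun i => key (i : ℕ) i rfl
    have hex1 : ∃ i, κ i < ν i := by
      by_contra h
      push_neg at h
      exact hne (funext fun i =>
        (Finset.sum_eq_sum_iff_of_le (fun j _ => h j)).mp hsum i (Finset.mem_univ i))
    have hex2 : ∃ i, ν i < κ i := by
      by_contra h
      push_neg at h
      exact hne (funext fun i =>
        ((Finset.sum_eq_sum_iff_of_le (fun j _ => h j)).mp hsum.symm i (Finset.mem_univ i)).symm)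
    have hA := ribbon_interval ν κ hρ
    rw [hmincomm] at hρ'
    have hB := ribbon_interval κ ν hρ'
    obtain ⟨a, ha⟩ := hex1
    obtain ⟨b, hb⟩ := hex2
    have hab : a ≠ b := fun h => by rw [h] at ha; omega
    rcases lt_or_gt_of_ne hab with hlt | hgt
    · have hsep : ∀ x y : Fin r, κ x < ν x → ν y < κ y → x < y := by
        intro x y hx hy
        have hxb : x < b := by
          rcases lt_trichotomy x b with h | h | h
          · exact h
          · rw [h] at hx; omega
          · exact absurd (hA a b x hlt.le h.le ha hx) (by omega)
        have hay : a < y := by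
          rcases lt_trichotomy a y with h | h | h
          · exact h
          · rw [← h] at hy; omega
          · exact absurd (hB y a b h.le hlt.le hy hb) (by omega)
        rcases lt_trichotomy x y with h | h | h
        · exact h
        · rw [h] at hx; omega
        · exact absurd (hA a y x hay.le h.le ha hx) (by omega)
      have hdom : Dominates κ ν := dom_of_sep ν κ hsum hsep
      exact Or.inr ⟨⟨hdom, Ne.symm hne⟩, fun hP => hnotboth ⟨hP.1, hdom⟩⟩
    · have hsep : ∀ x y : Fin r, ν x < κ x → κ y < ν y → x < y := by
        intro x y hx hy
        have hxa : x < a := by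
          rcases lt_trichotomy x a with h | h | h
          · exact h
          · rw [h] at hx; omega
          · exact absurd (hB b a x hgt.le h.le hb hx) (by omega)
        have hby : b < y := by
          rcases lt_trichotomy b y with h | h | h
          · exact h
          · rw [← h] at hy; omega
          · exact absurd (hA y b a h.le hgt.le hy ha) (by omega)
        rcases lt_trichotomy x y with h | h | h
        · exact h
        · rw [h] at hx; omega
        · exact absurd (hB b y x hby.le h.le hb hx) (by omega)
      have hdom : Dominates ν κ := dom_of_sep κ ν hsum.symm hsep
      exact Or.inl ⟨⟨hdom, hne⟩, fun hQ => hnotboth ⟨hdom, hQ.1⟩⟩
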